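/- There is no assignment of signs a, b, c ∈ {−1, 1} (in ℤ) satisfying all of the constraints imposed by the unliftable shadow movie, namely: (i) the constraint from the first type III move, ((−a = b ∧ b = −c) ∨ (−a = b ∧ b = c) ∨ (a = b ∧ b = c)); (ii) the constraint from the second type III move, ((−c = c ∧ c = −a) ∨ (−c = c ∧ c = a) ∨ (a = c)); (iii) the constraint from the third type III move, ((a = −a ∧ −a = b) ∨ (a = −a ∧ −a = −b) ∨ (a = b)); and (iv) the constraint b = −c from the final type II move. -/
import Mathlib

theorem unliftable_shadow_movie_constraints_unsat :
    ¬ ∃ a b c : ℤ, (a = -1 ∨ a = 1) ∧ (b = -1 ∨ b = 1) ∧ (c = -1 ∨ c = 1) ∧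
      ((-a = b ∧ b = -c) ∨ (-a = b ∧ b = c) ∨ (a = b ∧ b = c)) ∧
      ((-c = c ∧ c = -a) ∨ (-c = c ∧ c = a) ∨ (a = c)) ∧
      ((a = -a ∧ -a = b) ∨ (a = -a ∧ -a = -b) ∨ (a = b)) ∧
      b = -c := by
  rintro ⟨a, b, c, ha, hb, hc, h1, h2, h3, h4⟩
  rcases ha with rfl | rfl <;> rcases hb with rfl | rfl <;> rcases hc with rfl | rfl <;> omega
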